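/- Let K ≥ 1 and let F_1,…,F_K : ℝ → [0,1] be cumulative distribution functions, each continuous, each strictly increasing at every point s with F_k(s) ∈ (0,1), and each with finite first moment. Let B be the marginal ambiguity set induced by F_1,…,F_K. Then for every u ∈ ℝ^K the supremum defining Φ(u;B) is finite and Φ(u;B) = max_{p ∈ Δ^K} [ Σ_{k=1}^K u_k p_k + Σ_{k=1}^K ∫_{1−p_k}^1 F_k^{-1}(t) dt ], where the maximum over the simplex is attained. -/

import Mathlib

open MeasureTheory Set Filter

noncomputable def simplex (K : ℕ) : Set (Fin K → ℝ) :=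
  {p | (∀ k, 0 ≤ p k) ∧ ∑ k, p k = 1}

noncomputable def quantile (F : ℝ → ℝ) (s : ℝ) : ℝ := sInf {t | s ≤ F t}

noncomputable def dopaObj {K : ℕ} (F : Fin K → ℝ → ℝ) (u p : Fin K → ℝ) : ℝ :=
  ∑ k, u k * p k + ∑ k, ∫ t in (1 - p k)..1, quantile (F k) t

def marginalSet {K : ℕ} (F : Fin K → ℝ → ℝ) : Set (Measure (Fin K → ℝ)) :=
  {Q | IsProbabilityMeasure Q ∧ ∀ k s, Q {z | z k ≤ s} = ENNReal.ofReal (F k s)}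

noncomputable def PhiSet {K : ℕ} (F : Fin K → ℝ → ℝ) (u : Fin K → ℝ) : Set ℝ :=
  {x | ∃ Q ∈ marginalSet F, x = ∫ z, (⨆ k, u k + z k) ∂Q}


set_option linter.unusedSectionVars false
set_option linter.unnecessarySimpa false

section Quantile
variable {F : ℝ → ℝ} {s x : ℝ}

theorem quantile_bddBelow (hm : Monotone F) (hb : Tendsto F atBot (nhds 0))
    (hs0 : 0 < s) : BddBelow {t | s ≤ F t} := by
  obtain ⟨t0, ht0⟩ : ∃ t0, F t0 < s := (hb.eventually (eventually_lt_nhds hs0)).exists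
  refine ⟨t0, fun t ht => ?_⟩
  by_contra hlt
  exact absurd (le_trans ht (hm (le_of_lt (not_le.1 hlt)))) (not_le.2 ht0)

theorem le_F_quantile (hm : Monotone F) (hc : Continuous F)
    (hb : Tendsto F atBot (nhds 0)) (ht : Tendsto F atTop (nhds 1))
    (hs0 : 0 < s) (hs1 : s < 1) : s ≤ F (quantile F s) := by
  have hne : {t | s ≤ F t}.Nonempty := (ht.eventually (eventually_ge_nhds hs1)).exists
  have hcl : IsClosed {t | s ≤ F t} := isClosed_Ici.preimage hc
  exact hcl.csInf_mem hne (quantile_bddBelow hm hb hs0)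

theorem quantile_le_iff (hm : Monotone F) (hc : Continuous F)
    (hb : Tendsto F atBot (nhds 0)) (ht : Tendsto F atTop (nhds 1))
    (hs0 : 0 < s) (hs1 : s < 1) : quantile F s ≤ x ↔ s ≤ F x := by
  constructor
  · intro h
    exact le_trans (le_F_quantile hm hc hb ht hs0 hs1) (hm h)
  · intro h
    exact csInf_le (quantile_bddBelow hm hb hs0) h

theorem lt_quantile (hm : Monotone F) (hc : Continuous F)
    (hb : Tendsto F atBot (nhds 0)) (ht : Tendsto F atTop (nhds 1))
    (hs0 : 0 < s) (hs1 : s < 1) (h : F x < s) : x < quantile F s := by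
  by_contra hle
  exact absurd ((quantile_le_iff hm hc hb ht hs0 hs1).1 (not_lt.1 hle)) (not_le.2 h)

theorem quantile_monotoneOn (hm : Monotone F) (hc : Continuous F)
    (hb : Tendsto F atBot (nhds 0)) (ht : Tendsto F atTop (nhds 1)) :
    MonotoneOn (quantile F) (Ioo 0 1) := by
  intro s hs s' hs' hss
  exact csInf_le (quantile_bddBelow hm hb hs.1)
    (le_trans hss (le_F_quantile hm hc hb ht hs'.1 hs'.2))

theorem quantile_aemeasurable (hm : Monotone F) (hc : Continuous F)
    (hb : Tendsto F atBot (nhds 0)) (ht : Tendsto F atTop (nhds 1)) :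
    AEMeasurable (quantile F) (volume.restrict (Ioo (0:ℝ) 1)) :=
  aemeasurable_restrict_of_monotoneOn measurableSet_Ioo (quantile_monotoneOn hm hc hb ht)

end Quantile

theorem vol_Ioo_inter_Iic (a b y : ℝ) (hab : a ≤ b) :
    volume (Ioo a b ∩ Iic y) = ENNReal.ofReal (min b y - min a y) := by
  rcases le_total y a with hya | hay
  · have h1 : Ioo a b ∩ Iic y = ∅ := by
      ext t; simp only [mem_inter_iff, mem_Ioo, mem_Iic, mem_empty_iff_false, iff_false]
      rintro ⟨⟨h1, _⟩, h3⟩; linarith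
    rw [h1, min_eq_right hya, min_eq_right (le_trans hya hab)]
    simp
  · have hsub1 : Ioo a (min b y) ⊆ Ioo a b ∩ Iic y := fun t ht =>
      ⟨⟨ht.1, lt_of_lt_of_le ht.2 (min_le_left _ _)⟩, le_of_lt (lt_of_lt_of_le ht.2 (min_le_right _ _))⟩
    have hsub2 : Ioo a b ∩ Iic y ⊆ Ioc a (min b y) := fun t ht =>
      ⟨ht.1.1, le_min (le_of_lt ht.1.2) ht.2⟩
    have h1 := measure_mono (μ := (volume : Measure ℝ)) hsub1
    have h2 := measure_mono (μ := (volume : Measure ℝ)) hsub2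
    rw [Real.volume_Ioo] at h1
    rw [Real.volume_Ioc] at h2
    rw [min_eq_left hay]
    exact le_antisymm h2 h1

theorem vol_Ico_inter_Iic (a b y : ℝ) (hab : a ≤ b) :
    volume (Ico a b ∩ Iic y) = ENNReal.ofReal (min b y - min a y) := by
  have h1 : volume (Ico a b ∩ Iic y) = volume (Ioo a b ∩ Iic y) := by
    apply measure_congr
    exact MeasureTheory.ae_eq_set_inter Ioo_ae_eq_Ico.symm (ae_eq_refl _)
  rw [h1, vol_Ioo_inter_Iic a b y hab]

instance vol_Ioo_prob : IsProbabilityMeasure (volume.restrict (Ioo (0:ℝ) 1)) :=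
  ⟨by simp [Real.volume_Ioo]⟩

theorem map_fract_add (r : ℝ) (hr0 : 0 ≤ r) (hr1 : r ≤ 1) :
    (volume.restrict (Ioo (0:ℝ) 1)).map (fun t => Int.fract (t + r)) =
      volume.restrict (Ioo (0:ℝ) 1) := by
  have hmeas : Measurable (fun t : ℝ => Int.fract (t + r)) :=
    (measurable_id.add_const r).fract
  haveI : IsProbabilityMeasure
      ((volume.restrict (Ioo (0:ℝ) 1)).map (fun t => Int.fract (t + r))) :=
    Measure.isProbabilityMeasure_map hmeas.aemeasurable
  refine Measure.ext_of_Iic _ _ (fun y => ?_)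
  rw [Measure.map_apply hmeas measurableSet_Iic, Measure.restrict_apply' measurableSet_Ioo,
    Measure.restrict_apply' measurableSet_Ioo]
  set P := (fun t : ℝ => Int.fract (t + r)) ⁻¹' Iic y with hP
  set A1 : Set ℝ := Ioo 0 (1 - r) with hA1
  set A2 : Set ℝ := Ioo (max (1 - r) 0) 1 with hA2
  have hsplit : volume (P ∩ Ioo 0 1) = volume ((P ∩ A1) ∪ (P ∩ A2)) := by
    apply measure_congr
    rw [eventuallyEq_set]
    have hnull : ∀ᵐ t : ℝ, t ≠ 1 - r := by
      have : volume {(1 - r : ℝ)} = 0 := Real.volume_singleton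
      exact (ae_iff.2 (by simpa using this))
    filter_upwards [hnull] with t htne
    constructor
    · rintro ⟨hp, h0, h1⟩
      rcases lt_or_ge t (1 - r) with h | h
      · exact Or.inl ⟨hp, h0, h⟩
      · exact Or.inr ⟨hp, max_lt_iff.2 ⟨lt_of_le_of_ne h (Ne.symm htne), h0⟩, h1⟩
    · rintro (⟨hp, h0, h1⟩ | ⟨hp, h0, h1⟩)
      · exact ⟨hp, h0, lt_of_lt_of_le h1 (by linarith)⟩
      · exact ⟨hp, lt_of_le_of_lt (le_max_right _ _) h0, h1⟩
  have e1 : P ∩ A1 = Ioo 0 (1 - r) ∩ Iic (y - r) := by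
    ext t
    simp only [hP, hA1, mem_inter_iff, mem_preimage, mem_Iic, mem_Ioo]
    constructor
    · rintro ⟨hp, h0, h1⟩
      have hfr : Int.fract (t + r) = t + r := Int.fract_eq_self.2 ⟨by linarith, by linarith⟩
      exact ⟨⟨h0, h1⟩, by rw [hfr] at hp; linarith⟩
    · rintro ⟨⟨h0, h1⟩, hy⟩
      have hfr : Int.fract (t + r) = t + r := Int.fract_eq_self.2 ⟨by linarith, by linarith⟩
      exact ⟨by rw [hfr]; linarith, h0, h1⟩
  have e2 : P ∩ A2 = Ioo (max (1 - r) 0) 1 ∩ Iic (y + 1 - r) := by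
    ext t
    simp only [hP, hA2, mem_inter_iff, mem_preimage, mem_Iic, mem_Ioo]
    have key : ∀ t : ℝ, max (1-r) 0 < t → t < 1 → Int.fract (t + r) = t + r - 1 := by
      intro t h0 h1
      have h0' : 1 - r < t := lt_of_le_of_lt (le_max_left _ _) h0
      have : Int.fract (t + r) = Int.fract (t + r - 1 + (1:ℤ)) := by norm_num
      rw [this, Int.fract_add_intCast, Int.fract_eq_self.2 ⟨by linarith, by linarith⟩]
    constructor
    · rintro ⟨hp, h0, h1⟩
      rw [key t h0 h1] at hp
      exact ⟨⟨h0, h1⟩, by linarith⟩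
    · rintro ⟨⟨h0, h1⟩, hy⟩
      exact ⟨by rw [key t h0 h1]; linarith, h0, h1⟩
  have hdisj : Disjoint (P ∩ A1) (P ∩ A2) := by
    rw [e1, e2]
    apply Set.disjoint_left.2
    rintro t ⟨⟨_, h1⟩, _⟩ ⟨⟨h2, _⟩, _⟩
    exact absurd (lt_of_le_of_lt (le_max_left _ _) h2) (not_lt.2 (le_of_lt h1))
  have hm2 : MeasurableSet (P ∩ A2) := by rw [e2]; exact measurableSet_Ioo.inter measurableSet_Iic
  rw [hsplit, measure_union hdisj hm2, e1, e2, inter_comm (Iic y)]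
  have hmax1 : max (1 - r) 0 ≤ 1 := max_le (by linarith) zero_le_one
  rw [vol_Ioo_inter_Iic 0 (1-r) (y-r) (by linarith),
    vol_Ioo_inter_Iic _ 1 (y+1-r) hmax1,
    vol_Ioo_inter_Iic 0 1 y zero_le_one,
    ← ENNReal.ofReal_add (by rw [sub_nonneg]; exact min_le_min (by linarith) le_rfl)
      (by rw [sub_nonneg]; exact min_le_min hmax1 le_rfl)]
  congr 1
  simp only [min_def, max_def]
  split_ifs <;> linarith

noncomputable def qmeas (F : ℝ → ℝ) : Measure ℝ :=
  (volume.restrict (Ioo (0:ℝ) 1)).map (quantile F)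

section QM

variable {F : ℝ → ℝ} (hm : Monotone F) (hc : Continuous F)
    (h01 : ∀ s, F s ∈ Icc (0:ℝ) 1)
    (hb : Tendsto F atBot (nhds 0)) (ht : Tendsto F atTop (nhds 1))
include hm hc h01 hb ht

theorem qmeas_Iic (x : ℝ) : qmeas F (Iic x) = ENNReal.ofReal (F x) := by
  rw [qmeas, Measure.map_apply_of_aemeasurable (quantile_aemeasurable hm hc hb ht)
    measurableSet_Iic, Measure.restrict_apply' measurableSet_Ioo]
  have hset : quantile F ⁻¹' Iic x ∩ Ioo 0 1 = Ioo 0 1 ∩ Iic (F x) := by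
    ext t
    simp only [mem_inter_iff, mem_preimage, mem_Iic, mem_Ioo]
    constructor
    · rintro ⟨hp, h0, h1⟩
      exact ⟨⟨h0, h1⟩, (quantile_le_iff hm hc hb ht h0 h1).1 hp⟩
    · rintro ⟨⟨h0, h1⟩, hy⟩
      exact ⟨(quantile_le_iff hm hc hb ht h0 h1).2 hy, h0, h1⟩
  rw [hset, vol_Ioo_inter_Iic 0 1 (F x) zero_le_one, min_eq_right (h01 x).2,
    min_eq_left (h01 x).1, sub_zero]

theorem qmeas_prob : IsProbabilityMeasure (qmeas F) := by
  constructor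
  rw [qmeas, Measure.map_apply_of_aemeasurable (quantile_aemeasurable hm hc hb ht)
    MeasurableSet.univ, preimage_univ]
  simp [Real.volume_Ioo]

end QM

section Transfer

variable {K : ℕ} {F : Fin K → ℝ → ℝ}
    (hmono : ∀ k, Monotone (F k)) (hcont : ∀ k, Continuous (F k))
    (h01 : ∀ k s, F k s ∈ Icc (0:ℝ) 1)
    (hbot : ∀ k, Tendsto (F k) atBot (nhds 0))
    (htop : ∀ k, Tendsto (F k) atTop (nhds 1))
    {Q : Measure (Fin K → ℝ)} (hQ : Q ∈ marginalSet F) (k : Fin K)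
include hmono hcont h01 hbot htop hQ

theorem map_eval_eq : Q.map (fun z => z k) = qmeas (F k) := by
  haveI := hQ.1
  haveI : IsProbabilityMeasure (Q.map (fun z => z k)) :=
    Measure.isProbabilityMeasure_map (measurable_pi_apply k).aemeasurable
  haveI := qmeas_prob (hmono k) (hcont k) (h01 k) (hbot k) (htop k)
  refine Measure.ext_of_Iic _ _ (fun s => ?_)
  rw [Measure.map_apply (measurable_pi_apply k) measurableSet_Iic,
    qmeas_Iic (hmono k) (hcont k) (h01 k) (hbot k) (htop k)]
  exact hQ.2 k s

theorem integral_eval {g : ℝ → ℝ} (hg : Measurable g) :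
    ∫ z, g (z k) ∂Q = ∫ t in Ioo (0:ℝ) 1, g (quantile (F k) t) := by
  have h1 : ∫ z, g (z k) ∂Q = ∫ x, g x ∂(Q.map (fun z => z k)) :=
    (integral_map (measurable_pi_apply k).aemeasurable hg.aestronglyMeasurable).symm
  rw [h1, map_eval_eq hmono hcont h01 hbot htop hQ k, qmeas,
    integral_map (quantile_aemeasurable (hmono k) (hcont k) (hbot k) (htop k))
      hg.aestronglyMeasurable]

theorem integrable_eval {g : ℝ → ℝ} (hg : Measurable g) :
    Integrable (fun z => g (z k)) Q ↔
      IntegrableOn (fun t => g (quantile (F k) t)) (Ioo (0:ℝ) 1) volume := by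
  have h1 := integrable_map_measure (μ := Q) (f := fun z => z k) (g := g)
    hg.aestronglyMeasurable (measurable_pi_apply k).aemeasurable
  rw [map_eval_eq hmono hcont h01 hbot htop hQ k, qmeas] at h1
  have h2 := integrable_map_measure (μ := volume.restrict (Ioo (0:ℝ) 1))
    (f := quantile (F k)) (g := g) hg.aestronglyMeasurable
    (quantile_aemeasurable (hmono k) (hcont k) (hbot k) (htop k))
  have := h1.symm.trans h2
  exact this

end Transfer

section Main

variable {K : ℕ} {F : Fin K → ℝ → ℝ}
    (hmono : ∀ k, Monotone (F k)) (hcont : ∀ k, Continuous (F k))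
    (h01 : ∀ k s, F k s ∈ Icc (0:ℝ) 1)
    (hbot : ∀ k, Tendsto (F k) atBot (nhds 0))
    (htop : ∀ k, Tendsto (F k) atTop (nhds 1))
    (hint : ∀ k, IntegrableOn (quantile (F k)) (Ioo (0:ℝ) 1))
include hmono hcont h01 hbot htop hint

theorem integrable_coord {Q : Measure (Fin K → ℝ)} (hQ : Q ∈ marginalSet F) (k : Fin K) :
    Integrable (fun z : Fin K → ℝ => z k) Q := by
  have h := (integrable_eval hmono hcont h01 hbot htop hQ k (g := id) measurable_id).2
  exact h (hint k)

theorem integrable_sup (hK : 1 ≤ K) (u : Fin K → ℝ) {Q : Measure (Fin K → ℝ)}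
    (hQ : Q ∈ marginalSet F) : Integrable (fun z => ⨆ k, u k + z k) Q := by
  haveI := hQ.1
  have habs : ∀ k, Integrable (fun z : Fin K → ℝ => |u k + z k|) Q := fun k =>
    ((integrable_const (u k)).add (integrable_coord hmono hcont h01 hbot htop hint hQ k)).abs
  have hsum : Integrable (fun z : Fin K → ℝ => ∑ k, |u k + z k|) Q :=
    integrable_finset_sum _ (fun k _ => habs k)
  have hmeas : Measurable (fun z : Fin K → ℝ => ⨆ k, u k + z k) :=
    Measurable.iSup (fun k => measurable_const.add (measurable_pi_apply k))
  refine hsum.mono' hmeas.aestronglyMeasurable (Eventually.of_forall (fun z => ?_))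
  have hbdd : BddAbove (range fun k => u k + z k) := (Set.finite_range _).bddAbove
  rw [Real.norm_eq_abs, abs_le]
  constructor
  · have h1 := le_ciSup hbdd ⟨0, hK⟩
    have h2 : |u ⟨0, hK⟩ + z ⟨0, hK⟩| ≤ ∑ k, |u k + z k| :=
      Finset.single_le_sum (f := fun k => |u k + z k|) (fun i _ => abs_nonneg _)
        (Finset.mem_univ _)
    have h3 := neg_abs_le (u ⟨0, hK⟩ + z ⟨0, hK⟩)
    linarith
  · haveI : Nonempty (Fin K) := ⟨⟨0, hK⟩⟩
    exact ciSup_le fun k => le_trans (le_abs_self _)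
      (Finset.single_le_sum (f := fun k => |u k + z k|) (fun i _ => abs_nonneg _)
        (Finset.mem_univ _))

theorem integrable_pos_part {Q : Measure (Fin K → ℝ)} (hQ : Q ∈ marginalSet F)
    (k : Fin K) (c : ℝ) : Integrable (fun z : Fin K → ℝ => max (z k - c) 0) Q := by
  have hg : Measurable (fun x : ℝ => max (x - c) 0) :=
    (measurable_id.sub_const c).max measurable_const
  refine (integrable_eval hmono hcont h01 hbot htop hQ k hg).2 ?_
  have hb : IntegrableOn (fun t => |quantile (F k) t| + |c|) (Ioo (0:ℝ) 1) volume :=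
    (hint k).abs.add (integrableOn_const (by simp [Real.volume_Ioo]))
  refine hb.mono' ((hg.comp_aemeasurable
    (quantile_aemeasurable (hmono k) (hcont k) (hbot k) (htop k))).aestronglyMeasurable)
    (Eventually.of_forall (fun t => ?_))
  rw [Real.norm_eq_abs, abs_of_nonneg (le_max_right _ _)]
  exact max_le (le_trans (le_abs_self _) (abs_sub _ _))
    (add_nonneg (abs_nonneg _) (abs_nonneg _))

theorem integral_pos_part {Q : Measure (Fin K → ℝ)} (hQ : Q ∈ marginalSet F)
    (k : Fin K) (c : ℝ) :
    ∫ z, max (z k - c) 0 ∂Q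
      = (∫ t in Ioo (F k c) 1, quantile (F k) t) - (1 - F k c) * c := by
  have hg : Measurable (fun x : ℝ => max (x - c) 0) :=
    (measurable_id.sub_const c).max measurable_const
  rw [integral_eval hmono hcont h01 hbot htop hQ k hg]
  have hy0 : 0 ≤ F k c := (h01 k c).1
  have hy1 : F k c ≤ 1 := (h01 k c).2
  have hsub : Ioo (F k c) 1 ⊆ Ioo (0:ℝ) 1 := Ioo_subset_Ioo hy0 le_rfl
  have hstep1 : ∫ t in Ioo (0:ℝ) 1, max (quantile (F k) t - c) 0
      = ∫ t in Ioo (0:ℝ) 1, (Ioo (F k c) 1).indicator (fun t => quantile (F k) t - c) t := by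
    refine setIntegral_congr_ae measurableSet_Ioo ?_
    have hne : ∀ᵐ t : ℝ, t ≠ F k c :=
      ae_iff.2 (by simpa using (Real.volume_singleton (x := F k c)))
    filter_upwards [hne] with t htne htmem
    rcases lt_or_gt_of_ne htne with hlt | hgt
    · have hq : quantile (F k) t ≤ c :=
        (quantile_le_iff (hmono k) (hcont k) (hbot k) (htop k) htmem.1 htmem.2).2 (le_of_lt hlt)
      rw [indicator_of_notMem (fun hmem => absurd hmem.1 (not_lt.2 (le_of_lt hlt)))]
      exact max_eq_right (by linarith)
    · have hq : ¬ (quantile (F k) t ≤ c) := by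
        rw [quantile_le_iff (hmono k) (hcont k) (hbot k) (htop k) htmem.1 htmem.2]
        exact not_le.2 hgt
      rw [indicator_of_mem (mem_Ioo.mpr ⟨hgt, htmem.2⟩)]
      exact max_eq_left (by linarith [not_le.1 hq])
  rw [hstep1, setIntegral_indicator measurableSet_Ioo,
    inter_eq_right.2 hsub]
  rw [integral_sub ((hint k).mono_set hsub)
    (integrableOn_const (by rw [Real.volume_Ioo]; exact ENNReal.ofReal_ne_top))]
  rw [setIntegral_const, Real.volume_real_Ioo, max_eq_left (by linarith), smul_eq_mul]

end Main

section Main2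

variable {K : ℕ} {F : Fin K → ℝ → ℝ}
    (hmono : ∀ k, Monotone (F k)) (hcont : ∀ k, Continuous (F k))
    (h01 : ∀ k s, F k s ∈ Icc (0:ℝ) 1)
    (hbot : ∀ k, Tendsto (F k) atBot (nhds 0))
    (htop : ∀ k, Tendsto (F k) atTop (nhds 1))
    (hint : ∀ k, IntegrableOn (quantile (F k)) (Ioo (0:ℝ) 1))
include hmono hcont h01 hbot htop hint
set_option linter.unusedSectionVars false

omit hmono hcont h01 hbot htop hint in
theorem interval_quantile_eq (k : Fin K) (a : ℝ) (ha : a ≤ 1) :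
    ∫ t in a..1, quantile (F k) t = ∫ t in Ioo a 1, quantile (F k) t := by
  rw [intervalIntegral.integral_of_le ha, integral_Ioc_eq_integral_Ioo]

omit hmono hcont h01 hbot htop in
theorem intervalIntegrable_quantile (k : Fin K) {a b : ℝ}
    (ha : 0 ≤ a) (hb : b ≤ 1) (ha1 : a ≤ 1) (hb0 : 0 ≤ b) :
    IntervalIntegrable (quantile (F k)) volume a b := by
  rcases le_total a b with hab | hab
  · rw [intervalIntegrable_iff_integrableOn_Ioo_of_le hab]
    exact (hint k).mono_set (Ioo_subset_Ioo ha hb)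
  · exact ((intervalIntegrable_iff_integrableOn_Ioo_of_le hab).2
      ((hint k).mono_set (Ioo_subset_Ioo hb0 ha1))).symm

theorem upper_bound (hK : 1 ≤ K) (u p : Fin K → ℝ) (tstar : ℝ)
    (hp0 : ∀ k, 0 ≤ p k) (hp1 : ∑ k, p k = 1)
    (hFc : ∀ k, F k (tstar - u k) = 1 - p k)
    {Q : Measure (Fin K → ℝ)} (hQ : Q ∈ marginalSet F) :
    ∫ z, (⨆ k, u k + z k) ∂Q ≤ dopaObj F u p := by
  haveI := hQ.1
  have hp_le1 : ∀ k, p k ≤ 1 := fun k => by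
    rw [← hp1]
    exact Finset.single_le_sum (fun i _ => hp0 i) (Finset.mem_univ k)
  haveI : Nonempty (Fin K) := ⟨⟨0, hK⟩⟩
  have hptwise : ∀ z : Fin K → ℝ,
      (⨆ k, u k + z k) ≤ tstar + ∑ k, max (z k - (tstar - u k)) 0 := by
    intro z
    refine ciSup_le fun k => ?_
    have h1 : z k - (tstar - u k) ≤ max (z k - (tstar - u k)) 0 := le_max_left _ _
    have h2 : max (z k - (tstar - u k)) 0 ≤ ∑ j, max (z j - (tstar - u j)) 0 :=
      Finset.single_le_sum (f := fun j => max (z j - (tstar - u j)) 0)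
        (fun i _ => le_max_right _ _) (Finset.mem_univ k)
    linarith
  have hintRHS : Integrable (fun z : Fin K → ℝ =>
      tstar + ∑ k, max (z k - (tstar - u k)) 0) Q :=
    (integrable_const tstar).add (integrable_finset_sum _ fun k _ =>
      integrable_pos_part hmono hcont h01 hbot htop hint hQ k _)
  have hmain := integral_mono (integrable_sup hmono hcont h01 hbot htop hint hK u hQ)
    hintRHS hptwise
  rw [integral_add (integrable_const tstar) (integrable_finset_sum _ fun k _ =>
      integrable_pos_part hmono hcont h01 hbot htop hint hQ k _),
    integral_const, probReal_univ, one_smul,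
    integral_finset_sum _ (fun k _ =>
      integrable_pos_part hmono hcont h01 hbot htop hint hQ k _)] at hmain
  have hterm : ∀ k, ∫ z, max (z k - (tstar - u k)) 0 ∂Q
      = (∫ t in (1 - p k)..1, quantile (F k) t) - p k * (tstar - u k) := by
    intro k
    rw [integral_pos_part hmono hcont h01 hbot htop hint hQ k, hFc k,
      interval_quantile_eq k _ (by linarith [hp0 k])]
    ring
  rw [Finset.sum_congr rfl (fun k _ => hterm k), Finset.sum_sub_distrib] at hmain
  have halg : ∑ k, p k * (tstar - u k) = tstar - ∑ k, u k * p k := by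
    have h1 : ∑ k, p k * (tstar - u k) = (∑ k, p k) * tstar - ∑ k, u k * p k := by
      rw [Finset.sum_mul, ← Finset.sum_sub_distrib]
      exact Finset.sum_congr rfl fun k _ => by ring
    rw [h1, hp1, one_mul]
  rw [halg] at hmain
  rw [dopaObj]
  linarith

theorem simplex_max (u p : Fin K → ℝ) (tstar : ℝ)
    (hp0 : ∀ k, 0 ≤ p k) (hp1 : ∑ k, p k = 1)
    (hFc : ∀ k, F k (tstar - u k) = 1 - p k) :
    IsMaxOn (dopaObj F u) (simplex K) p := by
  intro q hq
  obtain ⟨hq0, hq1⟩ := hq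
  have hp_le1 : ∀ k, p k ≤ 1 := fun k => by
    rw [← hp1]; exact Finset.single_le_sum (fun i _ => hp0 i) (Finset.mem_univ k)
  have hq_le1 : ∀ k, q k ≤ 1 := fun k => by
    rw [← hq1]; exact Finset.single_le_sum (fun i _ => hq0 i) (Finset.mem_univ k)
  have key : ∀ k, ∫ t in (1 - q k)..1, quantile (F k) t
      ≤ (∫ t in (1 - p k)..1, quantile (F k) t) + (tstar - u k) * (q k - p k) := by
    intro k
    have hsplit : (∫ t in (1 - q k)..(1 - p k), quantile (F k) t)
        + ∫ t in (1 - p k)..1, quantile (F k) t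
        = ∫ t in (1 - q k)..1, quantile (F k) t :=
      intervalIntegral.integral_add_adjacent_intervals
        (intervalIntegrable_quantile hint k (by linarith [hq_le1 k]) (by linarith [hp0 k])
          (by linarith [hq0 k]) (by linarith [hp_le1 k]))
        (intervalIntegrable_quantile hint k (by linarith [hp_le1 k]) le_rfl
          (by linarith [hp0 k]) zero_le_one)
    have hmid : ∫ t in (1 - q k)..(1 - p k), quantile (F k) t
        ≤ (tstar - u k) * (q k - p k) := by
      rcases le_total (p k) (q k) with hpq | hqp
      · have hle : 1 - q k ≤ 1 - p k := by linarith
        rw [intervalIntegral.integral_of_le hle, integral_Ioc_eq_integral_Ioo]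
        have hbd : ∫ t in Ioo (1 - q k) (1 - p k), quantile (F k) t
            ≤ ∫ t in Ioo (1 - q k) (1 - p k), (tstar - u k) := by
          refine setIntegral_mono_on
            ((hint k).mono_set (Ioo_subset_Ioo (by linarith [hq_le1 k]) (by linarith [hp0 k])))
            (integrableOn_const (by rw [Real.volume_Ioo]; exact ENNReal.ofReal_ne_top))
            measurableSet_Ioo (fun t htmem => ?_)
          have ht01 : 0 < t ∧ t < 1 :=
            ⟨by linarith [htmem.1, hq_le1 k], by linarith [htmem.2, hp0 k]⟩
          refine (quantile_le_iff (hmono k) (hcont k) (hbot k) (htop k) ht01.1 ht01.2).2 ?_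
          rw [hFc k]
          exact le_of_lt htmem.2
        rw [setIntegral_const, Real.volume_real_Ioo, max_eq_left (by linarith),
          smul_eq_mul] at hbd
        calc ∫ t in Ioo (1 - q k) (1 - p k), quantile (F k) t
            ≤ (1 - p k - (1 - q k)) * (tstar - u k) := hbd
          _ = (tstar - u k) * (q k - p k) := by ring
      · have hle : 1 - p k ≤ 1 - q k := by linarith
        rw [intervalIntegral.integral_symm, intervalIntegral.integral_of_le hle,
          integral_Ioc_eq_integral_Ioo]
        have hbd : ∫ t in Ioo (1 - p k) (1 - q k), (tstar - u k)
            ≤ ∫ t in Ioo (1 - p k) (1 - q k), quantile (F k) t := by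
          refine setIntegral_mono_on
            (integrableOn_const (by rw [Real.volume_Ioo]; exact ENNReal.ofReal_ne_top))
            ((hint k).mono_set (Ioo_subset_Ioo (by linarith [hp_le1 k]) (by linarith [hq0 k])))
            measurableSet_Ioo (fun t htmem => ?_)
          have ht01 : 0 < t ∧ t < 1 :=
            ⟨by linarith [htmem.1, hp_le1 k], by linarith [htmem.2, hq0 k]⟩
          by_contra hcon
          have := (quantile_le_iff (hmono k) (hcont k) (hbot k) (htop k) ht01.1 ht01.2).1
            (le_of_lt (not_le.1 hcon))
          rw [hFc k] at this
          linarith [htmem.1]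
        rw [setIntegral_const, Real.volume_real_Ioo, max_eq_left (by linarith),
          smul_eq_mul] at hbd
        have : (1 - q k - (1 - p k)) * (tstar - u k) = -((tstar - u k) * (q k - p k)) := by ring
        linarith
    linarith
  have hsum := Finset.sum_le_sum (fun k (_ : k ∈ Finset.univ) => key k)
  rw [Finset.sum_add_distrib] at hsum
  have halg : ∑ k, (tstar - u k) * (q k - p k)
      = (∑ k, u k * p k) - ∑ k, u k * q k := by
    have h1 : ∑ k, (tstar - u k) * (q k - p k)
        = tstar * (∑ k, (q k - p k)) - ((∑ k, u k * q k) - ∑ k, u k * p k) := by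
      rw [Finset.mul_sum, ← Finset.sum_sub_distrib, ← Finset.sum_sub_distrib]
      exact Finset.sum_congr rfl fun k _ => by ring
    rw [h1, Finset.sum_sub_distrib, hq1, hp1]
    ring
  rw [halg] at hsum
  show dopaObj F u q ≤ dopaObj F u p
  rw [dopaObj, dopaObj]
  linarith
end Main2

theorem fract_eq_of_gt {t r : ℝ} (h1 : 1 - r < t) (h2 : t < 1) (h3 : r ≤ 1) :
    Int.fract (t + r) = t + r - 1 := by
  have : Int.fract (t + r) = Int.fract (t + r - 1 + (1:ℤ)) := by norm_num
  rw [this, Int.fract_add_intCast, Int.fract_eq_self.2 ⟨by linarith, by linarith⟩]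

theorem aemeasurable_pi' {δ : Type*} [MeasurableSpace δ] {μ : Measure δ} {K : ℕ}
    {g : Fin K → δ → ℝ} (h : ∀ i, AEMeasurable (g i) μ) :
    AEMeasurable (fun x (i : Fin K) => g i x) μ :=
  ⟨fun x i => (h i).mk (g i) x, measurable_pi_lambda _ fun i => (h i).measurable_mk, by
    filter_upwards [ae_all_iff.2 fun i => (h i).ae_eq_mk] with x hx using funext hx⟩

noncomputable def cpa {K : ℕ} (p : Fin K → ℝ) (k : Fin K) : ℝ :=
  ∑ j ∈ Finset.univ.filter (fun j => j < k), p j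

noncomputable def cpT {K : ℕ} (F : Fin K → ℝ → ℝ) (p : Fin K → ℝ) (t : ℝ) (k : Fin K) : ℝ :=
  quantile (F k) (Int.fract (t + (1 - p k - cpa p k)))

noncomputable def cpQ {K : ℕ} (F : Fin K → ℝ → ℝ) (p : Fin K → ℝ) : Measure (Fin K → ℝ) :=
  (volume.restrict (Ioo (0:ℝ) 1)).map (cpT F p)

section CPA

variable {K : ℕ} {p : Fin K → ℝ} (hp0 : ∀ k, 0 ≤ p k) (hp1 : ∑ k, p k = 1)
include hp0 hp1
set_option linter.unusedSectionVars false

theorem cpa_nonneg (k : Fin K) : 0 ≤ cpa p k := Finset.sum_nonneg fun j _ => hp0 j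

theorem cpa_add_eq (k : Fin K) :
    cpa p k + p k = ∑ j ∈ Finset.univ.filter (fun j => j ≤ k), p j := by
  have hins : Finset.univ.filter (fun j => j ≤ k)
      = insert k (Finset.univ.filter (fun j => j < k)) := by
    ext j
    simp only [Finset.mem_filter, Finset.mem_insert, Finset.mem_univ, true_and]
    constructor
    · intro hj; rcases eq_or_lt_of_le hj with h | h
      · exact Or.inl h
      · exact Or.inr h
    · rintro (h | h)
      · exact le_of_eq h
      · exact le_of_lt h
  rw [hins, Finset.sum_insert (by simp), cpa]
  ring

theorem cpa_add_le (k : Fin K) : cpa p k + p k ≤ 1 := by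
  rw [cpa_add_eq hp0 hp1, ← hp1]
  exact Finset.sum_le_sum_of_subset_of_nonneg (Finset.filter_subset _ _)
    (fun j _ _ => hp0 j)

theorem cpa_mono {j k : Fin K} (hjk : j < k) : cpa p j + p j ≤ cpa p k := by
  rw [cpa_add_eq hp0 hp1]
  refine Finset.sum_le_sum_of_subset_of_nonneg ?_ (fun i _ _ => hp0 i)
  intro i hi
  simp only [Finset.mem_filter, Finset.mem_univ, true_and] at hi ⊢
  exact lt_of_le_of_lt hi hjk

theorem cpa_cover (hK : 1 ≤ K) {x : ℝ} (hx : x ∈ Ico (0:ℝ) 1) :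
    ∃ k, x ∈ Ico (cpa p k) (cpa p k + p k) := by
  set S := Finset.univ.filter (fun k : Fin K => cpa p k ≤ x) with hS
  have hzero : cpa p (⟨0, hK⟩ : Fin K) = 0 := by
    rw [cpa]
    apply Finset.sum_eq_zero
    intro j hj
    simp only [Finset.mem_filter, Finset.mem_univ, true_and, Fin.lt_def] at hj
    omega
  have hSne : S.Nonempty := ⟨⟨0, hK⟩, by
    simp only [hS, Finset.mem_filter, Finset.mem_univ, true_and, hzero]
    exact hx.1⟩
  set k := S.max' hSne with hk
  have hk1 : cpa p k ≤ x := by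
    have := S.max'_mem hSne
    simp only [hS, Finset.mem_filter] at this
    exact this.2
  refine ⟨k, hk1, ?_⟩
  by_contra hcon
  push_neg at hcon
  rcases lt_or_ge (k.val + 1) K with hlt | hge
  · set k' : Fin K := ⟨k.val + 1, hlt⟩ with hk'
    have hsucc : cpa p k' = cpa p k + p k := by
      rw [cpa_add_eq hp0 hp1, cpa]
      congr 1
      ext j
      simp only [Finset.mem_filter, Finset.mem_univ, true_and, Fin.lt_def, Fin.le_def]
      have hk'v : (k' : ℕ) = k.val + 1 := rfl
      omega
    have hk'S : k' ∈ S := by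
      simp only [hS, Finset.mem_filter, Finset.mem_univ, true_and, hsucc]
      linarith
    have := S.le_max' k' hk'S
    rw [← hk] at this
    have : k'.val ≤ k.val := this
    simp only [hk'] at this
    omega
  · have huniv : Finset.univ.filter (fun j : Fin K => j ≤ k) = Finset.univ := by
      apply Finset.filter_true_of_mem
      intro j _
      have := j.isLt
      rw [Fin.le_def]
      omega
    have : cpa p k + p k = 1 := by rw [cpa_add_eq hp0 hp1, huniv, hp1]
    rw [this] at hcon
    linarith [hx.2]

theorem cpa_cover_eq (hK : 1 ≤ K) :
    Ico (0:ℝ) 1 = ⋃ k, Ico (cpa p k) (cpa p k + p k) := by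
  apply subset_antisymm
  · intro x hx
    exact mem_iUnion.2 (cpa_cover hp0 hp1 hK hx)
  · refine iUnion_subset fun k => Ico_subset_Ico (cpa_nonneg hp0 hp1 k) (cpa_add_le hp0 hp1 k)

theorem cpa_disjoint :
    Pairwise (Function.onFun Disjoint (fun k => Ico (cpa p k) (cpa p k + p k))) := by
  intro j k hjk
  rcases hjk.lt_or_gt with h | h
  · exact Set.disjoint_left.2 fun x hxj hxk =>
      absurd (lt_of_lt_of_le hxj.2 (le_trans (cpa_mono hp0 hp1 h) hxk.1)) (lt_irrefl x).elim
  · exact Set.disjoint_left.2 fun x hxj hxk =>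
      absurd (lt_of_lt_of_le hxk.2 (le_trans (cpa_mono hp0 hp1 h) hxj.1)) (lt_irrefl x).elim

end CPA

section CP

variable {K : ℕ} {F : Fin K → ℝ → ℝ}
    (hmono : ∀ k, Monotone (F k)) (hcont : ∀ k, Continuous (F k))
    (h01 : ∀ k s, F k s ∈ Icc (0:ℝ) 1)
    (hbot : ∀ k, Tendsto (F k) atBot (nhds 0))
    (htop : ∀ k, Tendsto (F k) atTop (nhds 1))
    (hint : ∀ k, IntegrableOn (quantile (F k)) (Ioo (0:ℝ) 1))
    {p : Fin K → ℝ} (hp0 : ∀ k, 0 ≤ p k) (hp1 : ∑ k, p k = 1)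
include hmono hcont h01 hbot htop hint hp0 hp1
set_option linter.unusedSectionVars false

theorem hp_le1 (k : Fin K) : p k ≤ 1 := by
  rw [← hp1]
  exact Finset.single_le_sum (fun i _ => hp0 i) (Finset.mem_univ k)

theorem cpr_nonneg (k : Fin K) : 0 ≤ 1 - p k - cpa p k := by
  have := cpa_add_le hp0 hp1 k
  linarith

theorem cpr_le1 (k : Fin K) : 1 - p k - cpa p k ≤ 1 := by
  have := cpa_nonneg hp0 hp1 k
  have := hp0 k
  linarith

theorem cpT_aemeasurable :
    AEMeasurable (cpT F p) (volume.restrict (Ioo (0:ℝ) 1)) := by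
  apply aemeasurable_pi'
  intro k
  have hmp := map_fract_add (1 - p k - cpa p k) (cpr_nonneg hmono hcont h01 hbot htop hint hp0 hp1 k)
    (cpr_le1 hmono hcont h01 hbot htop hint hp0 hp1 k)
  have hq : AEMeasurable (quantile (F k))
      ((volume.restrict (Ioo (0:ℝ) 1)).map (fun t => Int.fract (t + (1 - p k - cpa p k)))) := by
    rw [hmp]
    exact quantile_aemeasurable (hmono k) (hcont k) (hbot k) (htop k)
  exact hq.comp_aemeasurable ((measurable_id.add_const _).fract).aemeasurable

theorem cpQ_mem : cpQ F p ∈ marginalSet F := by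
  have hT := cpT_aemeasurable hmono hcont h01 hbot htop hint hp0 hp1
  constructor
  · exact Measure.isProbabilityMeasure_map hT
  · intro k s
    set r := 1 - p k - cpa p k with hrdef
    have hr0 : 0 ≤ r := cpr_nonneg hmono hcont h01 hbot htop hint hp0 hp1 k
    have hr1 : r ≤ 1 := cpr_le1 hmono hcont h01 hbot htop hint hp0 hp1 k
    have hmeasset : MeasurableSet {z : Fin K → ℝ | z k ≤ s} :=
      measurableSet_le (measurable_pi_apply k) measurable_const
    rw [cpQ, Measure.map_apply_of_aemeasurable hT hmeasset,
      Measure.restrict_apply' measurableSet_Ioo]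
    have step1 : volume ((cpT F p ⁻¹' {z : Fin K → ℝ | z k ≤ s}) ∩ Ioo 0 1)
        = volume (((fun t : ℝ => Int.fract (t + r)) ⁻¹' Iic (F k s)) ∩ Ioo 0 1) := by
      apply measure_congr
      rw [eventuallyEq_set]
      have hne : ∀ᵐ t : ℝ, t ≠ 1 - r :=
        ae_iff.2 (by simpa using (Real.volume_singleton (x := 1 - r)))
      filter_upwards [hne] with t htne
      simp only [mem_inter_iff, mem_preimage, mem_setOf_eq, mem_Iic, mem_Ioo, cpT, ← hrdef]
      constructor
      · rintro ⟨h1, h2⟩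
        refine ⟨?_, h2⟩
        have hV : Int.fract (t + r) ∈ Ioo (0:ℝ) 1 := by
          rcases lt_or_gt_of_ne htne with hlt | hgt
          · rw [Int.fract_eq_self.2 ⟨by linarith [h2.1], by linarith [h2.2]⟩]
            constructor <;> [linarith [h2.1]; linarith]
          · rw [fract_eq_of_gt hgt h2.2 hr1]
            constructor <;> linarith [h2.1, h2.2]
        exact (quantile_le_iff (hmono k) (hcont k) (hbot k) (htop k) hV.1 hV.2).1 h1
      · rintro ⟨h1, h2⟩
        refine ⟨?_, h2⟩
        have hV : Int.fract (t + r) ∈ Ioo (0:ℝ) 1 := by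
          rcases lt_or_gt_of_ne htne with hlt | hgt
          · rw [Int.fract_eq_self.2 ⟨by linarith [h2.1], by linarith [h2.2]⟩]
            constructor <;> [linarith [h2.1]; linarith]
          · rw [fract_eq_of_gt hgt h2.2 hr1]
            constructor <;> linarith [h2.1, h2.2]
        exact (quantile_le_iff (hmono k) (hcont k) (hbot k) (htop k) hV.1 hV.2).2 h1
    have hfr : Measurable (fun t : ℝ => Int.fract (t + r)) := (measurable_id.add_const r).fract
    rw [step1, ← Measure.restrict_apply' measurableSet_Ioo,
      ← Measure.map_apply hfr measurableSet_Iic,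
      map_fract_add r hr0 hr1, Measure.restrict_apply' measurableSet_Ioo, inter_comm,
      vol_Ioo_inter_Iic 0 1 (F k s) zero_le_one, min_eq_right (h01 k s).2,
      min_eq_left (h01 k s).1, sub_zero]

end CP

section CPI

variable {K : ℕ} {F : Fin K → ℝ → ℝ}
    (hmono : ∀ k, Monotone (F k)) (hcont : ∀ k, Continuous (F k))
    (h01 : ∀ k s, F k s ∈ Icc (0:ℝ) 1)
    (hbot : ∀ k, Tendsto (F k) atBot (nhds 0))
    (htop : ∀ k, Tendsto (F k) atTop (nhds 1))
    (hint : ∀ k, IntegrableOn (quantile (F k)) (Ioo (0:ℝ) 1))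
    {p : Fin K → ℝ} (hp0 : ∀ k, 0 ≤ p k) (hp1 : ∑ k, p k = 1)
include hmono hcont h01 hbot htop hint hp0 hp1
set_option linter.unusedSectionVars false

theorem cpQ_integral (hK : 1 ≤ K) (u : Fin K → ℝ) (tstar : ℝ)
    (hFc : ∀ k, F k (tstar - u k) = 1 - p k) :
    ∫ z, (⨆ k, u k + z k) ∂(cpQ F p) = dopaObj F u p := by
  haveI : Nonempty (Fin K) := ⟨⟨0, hK⟩⟩
  have hT := cpT_aemeasurable hmono hcont h01 hbot htop hint hp0 hp1
  have hQmem := cpQ_mem hmono hcont h01 hbot htop hint hp0 hp1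
  have hsupmeas : Measurable (fun z : Fin K → ℝ => ⨆ k, u k + z k) :=
    Measurable.iSup (fun k => measurable_const.add (measurable_pi_apply k))
  have hGint : IntegrableOn (fun t => ⨆ k, u k + cpT F p t k) (Ioo (0:ℝ) 1) volume := by
    have h1 := integrable_sup hmono hcont h01 hbot htop hint hK u hQmem
    rw [cpQ] at h1
    exact (integrable_map_measure hsupmeas.aestronglyMeasurable hT).1 h1
  rw [cpQ, integral_map hT hsupmeas.aestronglyMeasurable]
  have e0 : ∫ t in Ioo (0:ℝ) 1, (⨆ k, u k + cpT F p t k)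
      = ∫ t in Ico (0:ℝ) 1, (⨆ k, u k + cpT F p t k) :=
    setIntegral_congr_set Ioo_ae_eq_Ico
  have e1 : ∫ t in Ico (0:ℝ) 1, (⨆ k, u k + cpT F p t k)
      = ∑ k, ∫ t in Ico (cpa p k) (cpa p k + p k), (⨆ j, u j + cpT F p t j) := by
    rw [cpa_cover_eq hp0 hp1 hK]
    refine integral_iUnion_fintype (fun k => measurableSet_Ico) (cpa_disjoint hp0 hp1)
      (fun k => ?_)
    refine IntegrableOn.congr_set_ae ?_ Ioo_ae_eq_Ico.symm
    exact hGint.mono_set (Ioo_subset_Ioo (cpa_nonneg hp0 hp1 k) (cpa_add_le hp0 hp1 k))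
  have hpiece : ∀ k, ∫ t in Ico (cpa p k) (cpa p k + p k), (⨆ j, u j + cpT F p t j)
      = u k * p k + ∫ t in (1 - p k)..1, quantile (F k) t := by
    intro k
    have hr0 : ∀ j, 0 ≤ 1 - p j - cpa p j := fun j =>
      cpr_nonneg hmono hcont h01 hbot htop hint hp0 hp1 j
    have hr1 : ∀ j, 1 - p j - cpa p j ≤ 1 := fun j =>
      cpr_le1 hmono hcont h01 hbot htop hint hp0 hp1 j
    have hple : ∀ j, p j ≤ 1 := fun j => hp_le1 hmono hcont h01 hbot htop hint hp0 hp1 j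
    have ha0 : ∀ j, 0 ≤ cpa p j := fun j => cpa_nonneg hp0 hp1 j
    have hale : ∀ j, cpa p j + p j ≤ 1 := fun j => cpa_add_le hp0 hp1 j
    have heqon : EqOn (fun t => ⨆ j, u j + cpT F p t j)
        (fun t => u k + quantile (F k) (t + (1 - p k - cpa p k)))
        (Ioo (cpa p k) (cpa p k + p k)) := by
      intro t ht
      obtain ⟨htl, htr⟩ := ht
      have ht0 : 0 < t := lt_of_le_of_lt (ha0 k) htl
      have ht1 : t < 1 := lt_of_lt_of_le htr (hale k)
      have hvk : cpT F p t k = quantile (F k) (t + (1 - p k - cpa p k)) := by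
        rw [cpT]
        congr 1
        exact Int.fract_eq_self.2 ⟨by linarith [hple k], by linarith⟩
      have hvk_mem : 1 - p k < t + (1 - p k - cpa p k) ∧ t + (1 - p k - cpa p k) < 1 :=
        ⟨by linarith, by linarith⟩
      have hklow : tstar - u k ≤ quantile (F k) (t + (1 - p k - cpa p k)) := by
        apply le_of_lt
        refine lt_quantile (hmono k) (hcont k) (hbot k) (htop k) ?_ hvk_mem.2 ?_
        · linarith [hvk_mem.1, hp0 k, hple k]
        · rw [hFc k]; exact hvk_mem.1
      have hj : ∀ j, j ≠ k → u j + cpT F p t j ≤ tstar := by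
        intro j hjk
        have hVj : ∃ v, cpT F p t j = quantile (F j) v ∧ 0 < v ∧ v < 1 - p j := by
          rcases hjk.lt_or_gt with hlt | hgt
          · have h2 : cpa p j + p j ≤ cpa p k := cpa_mono hp0 hp1 hlt
            have htj : cpa p j + p j < t := lt_of_le_of_lt h2 htl
            refine ⟨t - p j - cpa p j, ?_, by linarith [hp0 j, ha0 j], by linarith [ha0 j]⟩
            rw [cpT, fract_eq_of_gt (by linarith) ht1 (hr1 j)]
            ring_nf
          · have h2 : cpa p k + p k ≤ cpa p j := cpa_mono hp0 hp1 hgt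
            have htj : t < cpa p j := lt_of_lt_of_le htr h2
            refine ⟨t + (1 - p j - cpa p j), ?_, by linarith [hr0 j], by linarith⟩
            rw [cpT]
            congr 1
            exact Int.fract_eq_self.2 ⟨by linarith [hr0 j], by linarith [hp0 j, ha0 j]⟩
        obtain ⟨v, hv, hv0, hv1⟩ := hVj
        have : quantile (F j) v ≤ tstar - u j := by
          refine (quantile_le_iff (hmono j) (hcont j) (hbot j) (htop j) hv0
            (lt_of_lt_of_le hv1 (by linarith [hp0 j]))).2 ?_
          rw [hFc j]
          exact le_of_lt hv1
        rw [hv]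
        linarith
      simp only
      apply le_antisymm
      · refine ciSup_le fun j => ?_
        by_cases hjk : j = k
        · subst hjk; rw [hvk]
        · calc u j + cpT F p t j ≤ tstar := hj j hjk
            _ ≤ u k + quantile (F k) (t + (1 - p k - cpa p k)) := by linarith
      · have := le_ciSup (f := fun j => u j + cpT F p t j) (Set.finite_range _).bddAbove k
        rw [hvk] at this
        exact this
    rw [setIntegral_congr_set Ioo_ae_eq_Ico.symm, setIntegral_congr_fun measurableSet_Ioo heqon,
      ← integral_Ioc_eq_integral_Ioo,
      ← intervalIntegral.integral_of_le (by linarith [hp0 k] : cpa p k ≤ cpa p k + p k)]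
    have hcomp := intervalIntegral.integral_comp_add_right
      (a := cpa p k) (b := cpa p k + p k) (fun s => u k + quantile (F k) s) (1 - p k - cpa p k)
    rw [hcomp]
    have he1 : cpa p k + (1 - p k - cpa p k) = 1 - p k := by ring
    have he2 : cpa p k + p k + (1 - p k - cpa p k) = 1 := by ring
    rw [he1, he2, intervalIntegral.integral_add (intervalIntegrable_const)
      (intervalIntegrable_quantile hint k
        (by linarith [hp_le1 hmono hcont h01 hbot htop hint hp0 hp1 k]) le_rfl
        (by linarith [hp0 k]) zero_le_one),
      intervalIntegral.integral_const]
    simp only [smul_eq_mul]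
    ring_nf
  rw [e0, e1, Finset.sum_congr rfl (fun k _ => hpiece k), Finset.sum_add_distrib, dopaObj]

end CPI


section Tstar

variable {K : ℕ} {F : Fin K → ℝ → ℝ}
    (hmono : ∀ k, Monotone (F k)) (hcont : ∀ k, Continuous (F k))
    (h01 : ∀ k s, F k s ∈ Icc (0:ℝ) 1)
    (hbot : ∀ k, Tendsto (F k) atBot (nhds 0))
    (htop : ∀ k, Tendsto (F k) atTop (nhds 1))
include hmono hcont h01 hbot htop
set_option linter.unusedSectionVars false

theorem tstar_exists (hK2 : 2 ≤ K) (u : Fin K → ℝ) :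
    ∃ tstar : ℝ, ∑ k, (1 - F k (tstar - u k)) = 1 := by
  set g : ℝ → ℝ := fun t => ∑ k, (1 - F k (t - u k)) with hg
  have hgc : Continuous g :=
    continuous_finset_sum _ fun k _ =>
      continuous_const.sub ((hcont k).comp (continuous_id.sub continuous_const))
  have hshift : ∀ k : Fin K, Tendsto (fun t : ℝ => t - u k) atBot atBot := by
    intro k
    simpa [sub_eq_add_neg] using tendsto_atBot_add_const_right atBot (-u k) tendsto_id
  have hshift' : ∀ k : Fin K, Tendsto (fun t : ℝ => t - u k) atTop atTop := by
    intro k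
    simpa [sub_eq_add_neg] using tendsto_atTop_add_const_right atTop (-u k) tendsto_id
  have hbotg : Tendsto g atBot (nhds (K : ℝ)) := by
    have h := tendsto_finset_sum (Finset.univ : Finset (Fin K))
      (fun k (_ : k ∈ Finset.univ) =>
        (tendsto_const_nhds (x := (1:ℝ))).sub ((hbot k).comp (hshift k)))
    have hsum : ((K:ℝ)) = (∑ _k : Fin K, ((1:ℝ) - 0)) := by simp
    rw [hsum]
    exact h
  have htopg : Tendsto g atTop (nhds 0) := by
    have h := tendsto_finset_sum (Finset.univ : Finset (Fin K))
      (fun k (_ : k ∈ Finset.univ) =>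
        (tendsto_const_nhds (x := (1:ℝ))).sub ((htop k).comp (hshift' k)))
    have hsum : ((0:ℝ)) = (∑ _k : Fin K, ((1:ℝ) - 1)) := by simp
    rw [hsum]
    exact h
  have hK1 : (1 : ℝ) < (K : ℝ) := by
    have h2 : (2 : ℝ) ≤ (K : ℝ) := by exact_mod_cast hK2
    linarith
  obtain ⟨a, ha⟩ : ∃ a, 1 < g a := (hbotg.eventually (eventually_gt_nhds hK1)).exists
  obtain ⟨b, hb⟩ : ∃ b, g b < 1 :=
    (htopg.eventually (eventually_lt_nhds (by norm_num : (0:ℝ) < 1))).exists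
  have hmem : (1 : ℝ) ∈ uIcc (g a) (g b) := by
    rw [Set.mem_uIcc]
    exact Or.inr ⟨le_of_lt hb, le_of_lt ha⟩
  obtain ⟨t, _, ht⟩ := intermediate_value_uIcc (hgc.continuousOn) hmem
  exact ⟨t, ht⟩

end Tstar

theorem stmt0 (K : ℕ) (hK : 1 ≤ K) (F : Fin K → ℝ → ℝ)
    (hmono : ∀ k, Monotone (F k))
    (hcont : ∀ k, Continuous (F k))
    (h01 : ∀ k s, F k s ∈ Icc (0:ℝ) 1)
    (hbot : ∀ k, Tendsto (F k) atBot (nhds 0))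
    (htop : ∀ k, Tendsto (F k) atTop (nhds 1))
    (hstrict : ∀ k, StrictMonoOn (F k) {s | F k s ∈ Ioo (0:ℝ) 1})
    (hint : ∀ k, IntegrableOn (quantile (F k)) (Ioo (0:ℝ) 1))
    (u : Fin K → ℝ) :
    (∀ Q ∈ marginalSet F, Integrable (fun z => ⨆ k, u k + z k) Q) ∧
    (PhiSet F u).Nonempty ∧ BddAbove (PhiSet F u) ∧
    ∃ p ∈ simplex K, IsMaxOn (dopaObj F u) (simplex K) p ∧
      sSup (PhiSet F u) = dopaObj F u p := by
  refine ⟨fun Q hQ => integrable_sup hmono hcont h01 hbot htop hint hK u hQ, ?_⟩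
  obtain ⟨p, hp0, hp1, hub, hmax, hex⟩ :
      ∃ p : Fin K → ℝ, (∀ k, 0 ≤ p k) ∧ (∑ k, p k = 1) ∧
        (∀ Q ∈ marginalSet F, (∫ z, (⨆ k, u k + z k) ∂Q) ≤ dopaObj F u p) ∧
        IsMaxOn (dopaObj F u) (simplex K) p ∧
        (∃ Q ∈ marginalSet F, (∫ z, (⨆ k, u k + z k) ∂Q) = dopaObj F u p) := by
    rcases eq_or_lt_of_le hK with hK1 | hK2
    · -- K = 1
      subst hK1
      have hp0 : ∀ k : Fin 1, (0:ℝ) ≤ (fun _ => (1:ℝ)) k := fun k => zero_le_one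
      have hp1 : ∑ k : Fin 1, (fun _ => (1:ℝ)) k = 1 := by simp
      have hval : ∀ Q ∈ marginalSet F,
          (∫ z, (⨆ k, u k + z k) ∂Q) = dopaObj F u (fun _ => (1:ℝ)) := by
        intro Q hQ
        haveI := hQ.1
        have hsup_eq : (fun z : Fin 1 → ℝ => ⨆ k, u k + z k) = fun z => u 0 + z 0 := by
          funext z
          exact ciSup_unique
        have hcoordint := integral_eval hmono hcont h01 hbot htop hQ 0
          (g := id) measurable_id
        simp only [id_eq] at hcoordint
        rw [hsup_eq, integral_add (integrable_const (u 0))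
          (integrable_coord hmono hcont h01 hbot htop hint hQ 0), integral_const,
          probReal_univ, one_smul, hcoordint, dopaObj]
        simp only [Fin.sum_univ_one]
        rw [show (1:ℝ) - 1 = 0 by norm_num,
          interval_quantile_eq (F := F) 0 0 zero_le_one]
        ring
      have hmem1 := cpQ_mem hmono hcont h01 hbot htop hint hp0 hp1
      refine ⟨fun _ => 1, hp0, hp1, fun Q hQ => le_of_eq (hval Q hQ), ?_, ?_⟩
      · intro q hq
        have hqp : q = fun _ => (1:ℝ) := by
          funext k
          have hsum := hq.2
          rw [Fin.sum_univ_one] at hsum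
          have hk0 : k = 0 := Subsingleton.elim k 0
          rw [hk0]
          exact hsum
        simp only [Set.mem_setOf_eq, hqp]
        exact le_refl _
      · exact ⟨cpQ F (fun _ => 1), hmem1, hval _ hmem1⟩
    · -- 2 ≤ K
      obtain ⟨tstar, hts⟩ := tstar_exists hmono hcont h01 hbot htop hK2 u
      have hp0 : ∀ k, 0 ≤ 1 - F k (tstar - u k) := fun k => by
        have := (h01 k (tstar - u k)).2
        linarith
      have hFc : ∀ k, F k (tstar - u k) = 1 - (fun k => 1 - F k (tstar - u k)) k :=
        fun k => by simp
      exact ⟨fun k => 1 - F k (tstar - u k), hp0, hts,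
        fun Q hQ => upper_bound hmono hcont h01 hbot htop hint hK u _ tstar hp0 hts hFc hQ,
        simplex_max hmono hcont h01 hbot htop hint u _ tstar hp0 hts hFc,
        ⟨cpQ F _, cpQ_mem hmono hcont h01 hbot htop hint hp0 hts,
          cpQ_integral hmono hcont h01 hbot htop hint hp0 hts hK u tstar hFc⟩⟩
  obtain ⟨Q0, hQ0, hQ0val⟩ := hex
  have hne : (PhiSet F u).Nonempty := ⟨_, Q0, hQ0, rfl⟩
  have hbdd : BddAbove (PhiSet F u) := ⟨dopaObj F u p, by
    rintro x ⟨Q, hQ, rfl⟩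
    exact hub Q hQ⟩
  refine ⟨hne, hbdd, p, ⟨hp0, hp1⟩, hmax, ?_⟩
  apply le_antisymm
  · refine csSup_le hne ?_
    rintro x ⟨Q, hQ, rfl⟩
    exact hub Q hQ
  · exact le_csSup hbdd ⟨Q0, hQ0, hQ0val.symm⟩
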